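/- Let f = x^2 − y^3 and g = x^4 − z^5 in K[x,y,z]. The Newton polyhedron NP(fg) ⊂ ℝ^3 has exactly the four vertices (6,0,0), (0,3,5), (2,0,5), (4,3,0), and its facet normals are e_1, e_2, e_3, (3,2,0), (5,0,4), and (15,10,12); in particular the normal (15,10,12) of the compact facet is neither a facet normal of NP(f) nor of NP(g). -/

import Mathlib

open MvPolynomial

/-- The Newton polyhedron of `g`: the convex hull of `{C + v : λ_C ≠ 0, v ≥ 0}`. -/
noncomputable def NewtonPolyhedron {K : Type*} [CommSemiring K]
    (g : MvPolynomial (Fin 3) K) : Set (Fin 3 → ℝ) :=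
  convexHull ℝ {w | ∃ d ∈ g.support, ∃ v : Fin 3 → ℝ,
    (∀ i, 0 ≤ v i) ∧ w = (fun i => (d i : ℝ)) + v}

section Aux
open Finset Module

@[simp] lemma vec3_two {α : Type*} (a b c : α) : ![a, b, c] 2 = c := rfl

abbrev V3 := Fin 3 → ℝ

noncomputable def dot (v w : V3) : ℝ := ∑ k, v k * w k

lemma dot_expand (v w : V3) : dot v w = v 0 * w 0 + v 1 * w 1 + v 2 * w 2 := by
  simp [dot, Fin.sum_univ_three]

lemma dot_linear (v : V3) : IsLinearMap ℝ (dot v) := by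
  constructor <;> intros <;> simp [dot_expand] <;> ring

lemma dot_add (v w q : V3) : dot v (w + q) = dot v w + dot v q := (dot_linear v).map_add w q

lemma dot_smul_right (v : V3) (t : ℝ) (w : V3) : dot v (t • w) = t * dot v w := by
  have := (dot_linear v).map_smul t w
  simpa using this

lemma dot_smul_left (v w : V3) (c : ℝ) : dot (c • v) w = c * dot v w := by
  rw [dot_expand, dot_expand]
  simp [Pi.smul_apply]
  ring

lemma dot_nonneg' (v q : V3) (hv : ∀ i, 0 ≤ v i) (hq : ∀ i, 0 ≤ q i) : 0 ≤ dot v q := by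
  rw [dot_expand]
  have := mul_nonneg (hv 0) (hq 0)
  have := mul_nonneg (hv 1) (hq 1)
  have := mul_nonneg (hv 2) (hq 2)
  linarith

noncomputable def φ (v : V3) : V3 →ₗ[ℝ] ℝ := (dot_linear v).mk' (dot v)

lemma rank_le_two (v : V3) (hv : v ≠ 0) (μ : ℝ) (s : Set V3)
    (hs : ∀ w ∈ s, dot v w = μ) : finrank ℝ (vectorSpan ℝ s) ≤ 2 := by
  have hker : vectorSpan ℝ s ≤ LinearMap.ker (φ v) := by
    rw [vectorSpan, Submodule.span_le]
    rintro x ⟨p, hp, q, hq, rfl⟩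
    simp only [SetLike.mem_coe, LinearMap.mem_ker, vsub_eq_sub]
    have : φ v (p - q) = dot v p - dot v q := map_sub _ _ _
    rw [this, hs p hp, hs q hq, sub_self]
  have hrange : 0 < finrank ℝ (LinearMap.range (φ v)) := by
    obtain ⟨i, hi⟩ := Function.ne_iff.mp hv
    have : (φ v) (Pi.single i 1) ≠ 0 := by
      show dot v (Pi.single i 1) ≠ 0
      fin_cases i <;> simp [dot_expand, Pi.single_apply] at hi ⊢ <;> simpa using hi
    have hne : LinearMap.range (φ v) ≠ ⊥ := by
      intro hbot
      exact this (by simpa [hbot] using LinearMap.mem_range_self (φ v) (Pi.single i 1))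
    exact Module.finrank_pos_iff.mpr (Submodule.nontrivial_iff_ne_bot.mpr hne)
  have hsum := LinearMap.finrank_range_add_finrank_ker (φ v)
  rw [Module.finrank_fin_fun] at hsum
  have : finrank ℝ (LinearMap.ker (φ v)) ≤ 2 := by omega
  exact le_trans (Submodule.finrank_mono hker) this

lemma rank_le_one_V3 (p d : V3) (s : Set V3) (hs : ∀ w ∈ s, ∃ t : ℝ, w = p + t • d) :
    finrank ℝ (vectorSpan ℝ s) ≤ 1 := by
  have hle : vectorSpan ℝ s ≤ Submodule.span ℝ {d} := by
    rw [vectorSpan, Submodule.span_le]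
    rintro x ⟨w1, h1, w2, h2, rfl⟩
    obtain ⟨t1, rfl⟩ := hs w1 h1
    obtain ⟨t2, rfl⟩ := hs w2 h2
    show (p + t1 • d) -ᵥ (p + t2 • d) ∈ (Submodule.span ℝ {d} : Set V3)
    have : (p + t1 • d) -ᵥ (p + t2 • d) = (t1 - t2) • d := by
      rw [vsub_eq_sub, sub_smul]; abel
    rw [this]
    exact Submodule.smul_mem _ _ (Submodule.mem_span_singleton_self d)
  refine le_trans (Submodule.finrank_mono hle) ?_
  by_cases hd : d = 0
  · subst hd
    rw [show ({(0:V3)} : Set V3) = ((0:Submodule ℝ V3) : Set V3) by simp, Submodule.span_eq]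
    simp
  · rw [finrank_span_singleton hd]

lemma two_le_rank (s : Set V3) (p u u' : V3) (hp : p ∈ s) (h1 : p + u ∈ s) (h2 : p + u' ∈ s)
    (hind : LinearIndependent ℝ ![u, u']) : 2 ≤ finrank ℝ (vectorSpan ℝ s) := by
  have hle : Submodule.span ℝ (Set.range ![u, u']) ≤ vectorSpan ℝ s := by
    rw [Submodule.span_le, vectorSpan]
    intro x hx
    obtain ⟨i, rfl⟩ := hx
    have hu : ∀ z, p + z ∈ s → z ∈ Submodule.span ℝ (s -ᵥ s) := by
      intro z hz
      have : z = (p + z) -ᵥ p := by simp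
      rw [this]
      exact Submodule.subset_span (Set.vsub_mem_vsub hz hp)
    fin_cases i
    · exact hu u h1
    · exact hu u' h2
  have hcard : finrank ℝ (Submodule.span ℝ (Set.range ![u, u'])) = 2 := by
    rw [finrank_span_eq_card hind]; simp
  calc (2:ℕ) = finrank ℝ (Submodule.span ℝ (Set.range ![u, u'])) := hcard.symm
    _ ≤ _ := Submodule.finrank_mono hle

section NPlem
variable {K : Type*} [CommSemiring K]

def gen (h : MvPolynomial (Fin 3) K) : Set V3 :=
  {w | ∃ d ∈ h.support, ∃ q : V3, (∀ i, 0 ≤ q i) ∧ w = (fun i => (d i : ℝ)) + q}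

lemma NP_eq (h : MvPolynomial (Fin 3) K) : NewtonPolyhedron h = convexHull ℝ (gen h) := rfl

lemma NP_lower (h : MvPolynomial (Fin 3) K) (v : V3) (μ : ℝ)
    (hgen : ∀ w ∈ gen h, μ ≤ dot v w) :
    ∀ u ∈ NewtonPolyhedron h, μ ≤ dot v u := fun u hu =>
  convexHull_min hgen (convex_halfSpace_ge (dot_linear v) μ) hu

lemma NP_confine (h : MvPolynomial (Fin 3) K) (v : V3) (μ : ℝ) (A : Set V3)
    (hA : Convex ℝ A) (hAμ : ∀ w ∈ A, dot v w = μ)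
    (hgen : ∀ w ∈ gen h, w ∈ A ∨ μ < dot v w) :
    ∀ w ∈ NewtonPolyhedron h, dot v w ≤ μ → w ∈ A := by
  have hconv : Convex ℝ (A ∪ {w | μ < dot v w}) := by
    rintro x hx y hy a b ha hb hab
    have hdot : dot v (a • x + b • y) = a * dot v x + b * dot v y := by
      rw [(dot_linear v).map_add, (dot_linear v).map_smul, (dot_linear v).map_smul]; rfl
    have hmu : a * μ + b * μ = μ := by
      have := congrArg (· * μ) hab
      simpa [add_mul] using this
    rcases hx with hx | hx <;> rcases hy with hy | hy
    · exact Or.inl (hA hx hy ha hb hab)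
    · rcases eq_or_lt_of_le hb with hb0 | hb0
      · left
        have hb0 : b = 0 := hb0.symm
        have : a = 1 := by linarith
        simpa [hb0, this] using hx
      · right
        have := hAμ x hx
        have hy' : μ < dot v y := hy
        simp only [Set.mem_setOf_eq, hdot, this]
        have := mul_lt_mul_of_pos_left hy' hb0
        linarith
    · rcases eq_or_lt_of_le ha with ha0 | ha0
      · left
        have ha0 : a = 0 := ha0.symm
        have : b = 1 := by linarith
        simpa [ha0, this] using hy
      · right
        have := hAμ y hy
        have hx' : μ < dot v x := hx
        simp only [Set.mem_setOf_eq, hdot, this]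
        have := mul_lt_mul_of_pos_left hx' ha0
        linarith
    · right
      have hx' : μ < dot v x := hx
      have hy' : μ < dot v y := hy
      simp only [Set.mem_setOf_eq, hdot]
      rcases eq_or_lt_of_le ha with ha0 | ha0
      · have ha1 : a = 0 := ha0.symm
        have hb1 : b = 1 := by linarith
        subst ha1; subst hb1
        simpa using hy'
      · have h1 := mul_lt_mul_of_pos_left hx' ha0
        have h2 := mul_le_mul_of_nonneg_left hy'.le hb
        linarith
  have hsub : NewtonPolyhedron h ⊆ A ∪ {w | μ < dot v w} :=
    convexHull_min (fun w hw => hgen w hw) hconv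
  intro w hw hle
  rcases hsub hw with h1 | h1
  · exact h1
  · exact absurd hle (not_le.mpr h1)

def Face (h : MvPolynomial (Fin 3) K) (v : V3) : Set V3 :=
  {w ∈ NewtonPolyhedron h | ∀ u ∈ NewtonPolyhedron h, dot v w ≤ dot v u}

lemma mem_Face (h : MvPolynomial (Fin 3) K) (v : V3) (μ : ℝ) (w : V3)
    (hw : w ∈ gen h) (hwμ : dot v w = μ) (hgen : ∀ w' ∈ gen h, μ ≤ dot v w') :
    w ∈ Face h v :=
  ⟨subset_convexHull ℝ _ hw, fun u hu => by rw [hwμ]; exact NP_lower h v μ hgen u hu⟩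

lemma line_convex (p d : V3) : Convex ℝ {w : V3 | ∃ t : ℝ, w = p + t • d} := by
  rintro x ⟨t1, rfl⟩ y ⟨t2, rfl⟩ a b ha hb hab
  refine ⟨a * t1 + b * t2, ?_⟩
  have : a • (p + t1 • d) + b • (p + t2 • d) = (a + b) • p + (a * t1 + b * t2) • d := by
    module
  rw [this, hab, one_smul]

lemma Face_subset (h : MvPolynomial (Fin 3) K) (v : V3) (μ : ℝ) (A : Set V3)
    (hA : Convex ℝ A) (hAμ : ∀ w ∈ A, dot v w = μ)
    (hgen : ∀ w ∈ gen h, w ∈ A ∨ μ < dot v w)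
    (w₀ : V3) (hw₀ : w₀ ∈ gen h) (hw₀μ : dot v w₀ = μ) :
    Face h v ⊆ A := by
  rintro w ⟨hwNP, hwmin⟩
  refine NP_confine h v μ A hA hAμ hgen w hwNP ?_
  have := hwmin w₀ (subset_convexHull ℝ _ hw₀)
  rwa [hw₀μ] at this

lemma Face_level (h : MvPolynomial (Fin 3) K) (v : V3) (μ : ℝ)
    (hlow : ∀ w ∈ gen h, μ ≤ dot v w)
    (w₀ : V3) (hw₀ : w₀ ∈ gen h) (hw₀μ : dot v w₀ = μ) :
    ∀ w ∈ Face h v, dot v w = μ := by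
  rintro w ⟨hwNP, hwmin⟩
  have h1 := NP_lower h v μ hlow w hwNP
  have h2 := hwmin w₀ (subset_convexHull ℝ _ hw₀)
  rw [hw₀μ] at h2
  linarith

lemma Face_line_rank (h : MvPolynomial (Fin 3) K) (v p d : V3) (μ : ℝ)
    (hp : dot v p = μ) (hd : dot v d = 0)
    (hgen : ∀ w ∈ gen h, (∃ t : ℝ, w = p + t • d) ∨ μ < dot v w)
    (w₀ : V3) (hw₀ : w₀ ∈ gen h) (hw₀μ : dot v w₀ = μ) :
    finrank ℝ (vectorSpan ℝ (Face h v)) ≤ 1 := by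
  apply rank_le_one_V3 p d
  intro w hw
  refine Face_subset h v μ {w | ∃ t : ℝ, w = p + t • d} (line_convex p d) ?_ hgen w₀ hw₀ hw₀μ hw
  rintro w' ⟨t, rfl⟩
  rw [dot_add, dot_smul_right, hd, hp]
  ring

lemma Face_rank_two (h : MvPolynomial (Fin 3) K) (v : V3) (hv : v ≠ 0) (μ : ℝ)
    (hlow : ∀ w ∈ gen h, μ ≤ dot v w)
    (p u u' : V3) (hpg : p ∈ gen h) (hpμ : dot v p = μ)
    (h1g : p + u ∈ gen h) (h1μ : dot v (p + u) = μ)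
    (h2g : p + u' ∈ gen h) (h2μ : dot v (p + u') = μ)
    (hli : LinearIndependent ℝ ![u, u']) :
    finrank ℝ (vectorSpan ℝ (Face h v)) = 2 := by
  refine le_antisymm ?_ ?_
  · exact rank_le_two v hv μ _ (Face_level h v μ hlow p hpg hpμ)
  · exact two_le_rank _ p u u' (mem_Face h v μ p hpg hpμ hlow)
      (mem_Face h v μ _ h1g h1μ hlow) (mem_Face h v μ _ h2g h2μ hlow) hli

lemma Face_smul (h : MvPolynomial (Fin 3) K) (v : V3) (c : ℝ) (hc : 0 < c) :
    Face h (c • v) = Face h v := by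
  ext w
  unfold Face
  simp only [Set.mem_setOf_eq, dot_smul_left]
  constructor
  · rintro ⟨h1, h2⟩
    exact ⟨h1, fun u hu => le_of_mul_le_mul_left (h2 u hu) hc⟩
  · rintro ⟨h1, h2⟩
    exact ⟨h1, fun u hu => mul_le_mul_of_nonneg_left (h2 u hu) hc.le⟩

lemma mem_extreme_of_unique (h : MvPolynomial (Fin 3) K) (x v : V3) (μ : ℝ)
    (hx : x ∈ gen h) (hxμ : dot v x = μ)
    (hlow : ∀ w ∈ gen h, μ ≤ dot v w)
    (huniq : ∀ w ∈ gen h, dot v w = μ → w = x) :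
    x ∈ Set.extremePoints ℝ (NewtonPolyhedron h) := by
  refine ⟨subset_convexHull ℝ _ hx, ?_⟩
  intro x₁ h₁ x₂ h₂ hseg
  obtain ⟨a, b, ha, hb, hab, hsum⟩ := hseg
  have k₁ := NP_lower h v μ hlow x₁ h₁
  have k₂ := NP_lower h v μ hlow x₂ h₂
  have hd : a * dot v x₁ + b * dot v x₂ = μ := by
    have : dot v (a • x₁ + b • x₂) = a * dot v x₁ + b * dot v x₂ := by
      rw [(dot_linear v).map_add, (dot_linear v).map_smul, (dot_linear v).map_smul]; rfl
    rw [← this, hsum, hxμ]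
  have hmu : a * μ + b * μ = μ := by
    have := congrArg (· * μ) hab
    simpa [add_mul] using this
  have e₁ : dot v x₁ = μ := by
    by_contra hne
    have : μ < dot v x₁ := lt_of_le_of_ne k₁ (Ne.symm hne)
    have h1 := mul_lt_mul_of_pos_left this ha
    have h2 := mul_le_mul_of_nonneg_left k₂ hb.le
    linarith
  have e₂ : dot v x₂ = μ := by
    by_contra hne
    have : μ < dot v x₂ := lt_of_le_of_ne k₂ (Ne.symm hne)
    have h1 := mul_lt_mul_of_pos_left this hb
    have h2 := mul_le_mul_of_nonneg_left k₁ ha.le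
    linarith
  have hgen' : ∀ w ∈ gen h, w ∈ ({x} : Set V3) ∨ μ < dot v w := by
    intro w hw
    rcases eq_or_lt_of_le (hlow w hw) with heq | hlt
    · exact Or.inl (huniq w hw heq.symm)
    · exact Or.inr hlt
  have c₁ : x₁ ∈ ({x} : Set V3) :=
    NP_confine h v μ {x} (convex_singleton x) (by rintro w rfl; exact hxμ) hgen' x₁ h₁ e₁.le
  have c₂ : x₂ ∈ ({x} : Set V3) :=
    NP_confine h v μ {x} (convex_singleton x) (by rintro w rfl; exact hxμ) hgen' x₂ h₂ e₂.le
  exact c₁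

end NPlem
end Aux
section Conc
open MvPolynomial Finset Module

noncomputable def P1 : V3 := ![6, 0, 0]
noncomputable def P2 : V3 := ![4, 3, 0]
noncomputable def P3 : V3 := ![2, 0, 5]
noncomputable def P4 : V3 := ![0, 3, 5]

noncomputable def D1 : Fin 3 →₀ ℕ := Finsupp.single 0 6
noncomputable def D2 : Fin 3 →₀ ℕ := Finsupp.single 0 4 + Finsupp.single 1 3
noncomputable def D3 : Fin 3 →₀ ℕ := Finsupp.single 0 2 + Finsupp.single 2 5
noncomputable def D4 : Fin 3 →₀ ℕ := Finsupp.single 1 3 + Finsupp.single 2 5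

lemma castD1 : (fun i => ((D1 : Fin 3 →₀ ℕ) i : ℝ)) = P1 := by
  funext i; fin_cases i <;> simp [D1, P1, Finsupp.single_apply]
lemma castD2 : (fun i => ((D2 : Fin 3 →₀ ℕ) i : ℝ)) = P2 := by
  funext i; fin_cases i <;> simp [D2, P2, Finsupp.single_apply]
lemma castD3 : (fun i => ((D3 : Fin 3 →₀ ℕ) i : ℝ)) = P3 := by
  funext i; fin_cases i <;> simp [D3, P3, Finsupp.single_apply]
lemma castD4 : (fun i => ((D4 : Fin 3 →₀ ℕ) i : ℝ)) = P4 := by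
  funext i; fin_cases i <;> simp [D4, P4, Finsupp.single_apply]

lemma dotP1 (v : V3) : dot v P1 = 6 * v 0 := by rw [dot_expand]; simp [P1]; ring
lemma dotP2 (v : V3) : dot v P2 = 4 * v 0 + 3 * v 1 := by rw [dot_expand]; simp [P2]; ring
lemma dotP3 (v : V3) : dot v P3 = 2 * v 0 + 5 * v 2 := by rw [dot_expand]; simp [P3]; ring
lemma dotP4 (v : V3) : dot v P4 = 3 * v 1 + 5 * v 2 := by rw [dot_expand]; simp [P4]; ring

section Poly
variable {K : Type*} [Field K]

lemma fg_eq : (X 0 ^ 2 - X 1 ^ 3 : MvPolynomial (Fin 3) K) * (X 0 ^ 4 - X 2 ^ 5)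
    = monomial D1 1 + monomial D2 (-1) + monomial D3 (-1) + monomial D4 1 := by
  have e1 : (monomial D1 (1:K)) = X 0 ^ 6 := by rw [D1, X_pow_eq_monomial]
  have e2 : (monomial D2 (-1:K)) = -(X 0 ^ 4 * X 1 ^ 3) := by
    rw [D2, X_pow_eq_monomial, X_pow_eq_monomial, monomial_mul]
    simp [map_neg]
  have e3 : (monomial D3 (-1:K)) = -(X 0 ^ 2 * X 2 ^ 5) := by
    rw [D3, X_pow_eq_monomial, X_pow_eq_monomial, monomial_mul]
    simp [map_neg]
  have e4 : (monomial D4 (1:K)) = X 1 ^ 3 * X 2 ^ 5 := by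
    rw [D4, X_pow_eq_monomial, X_pow_eq_monomial, monomial_mul]
    simp
  rw [e1, e2, e3, e4]
  ring

lemma Dne : D1 ≠ D2 ∧ D1 ≠ D3 ∧ D1 ≠ D4 ∧ D2 ≠ D3 ∧ D2 ≠ D4 ∧ D3 ≠ D4 := by
  refine ⟨?_, ?_, ?_, ?_, ?_, ?_⟩ <;> intro h <;>
    (have := DFunLike.congr_fun h 0; simp [D1, D2, D3, D4, Finsupp.single_apply] at this)

lemma supp_fg (f g : MvPolynomial (Fin 3) K)
    (hf : f = X 0 ^ 2 - X 1 ^ 3) (hg : g = X 0 ^ 4 - X 2 ^ 5) :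
    ∀ d, d ∈ (f * g).support ↔ (d = D1 ∨ d = D2 ∨ d = D3 ∨ d = D4) := by
  intro d
  rw [hf, hg, fg_eq, MvPolynomial.mem_support_iff]
  obtain ⟨h12, h13, h14, h23, h24, h34⟩ := (Dne : _ ∧ _ ∧ _ ∧ _ ∧ _ ∧ (D3 : Fin 3 →₀ ℕ) ≠ D4)
  simp only [coeff_add, coeff_monomial]
  constructor
  · intro hne
    by_contra hd
    push_neg at hd
    obtain ⟨hd1, hd2, hd3, hd4⟩ := hd
    simp [Ne.symm hd1, Ne.symm hd2, Ne.symm hd3, Ne.symm hd4] at hne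
  · rintro (rfl | rfl | rfl | rfl) <;>
      simp [h12, h13, h14, h23, h24, h34, Ne.symm h12, Ne.symm h13, Ne.symm h14,
        Ne.symm h23, Ne.symm h24, Ne.symm h34]

lemma gen_fg_iff (f g : MvPolynomial (Fin 3) K)
    (hf : f = X 0 ^ 2 - X 1 ^ 3) (hg : g = X 0 ^ 4 - X 2 ^ 5) (w : V3) :
    w ∈ gen (f * g) ↔ ∃ q : V3, (∀ i, 0 ≤ q i) ∧
      (w = P1 + q ∨ w = P2 + q ∨ w = P3 + q ∨ w = P4 + q) := by
  constructor
  · rintro ⟨d, hd, q, hq, rfl⟩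
    rw [supp_fg f g hf hg] at hd
    rcases hd with rfl | rfl | rfl | rfl
    · exact ⟨q, hq, Or.inl (by rw [castD1])⟩
    · exact ⟨q, hq, Or.inr (Or.inl (by rw [castD2]))⟩
    · exact ⟨q, hq, Or.inr (Or.inr (Or.inl (by rw [castD3])))⟩
    · exact ⟨q, hq, Or.inr (Or.inr (Or.inr (by rw [castD4])))⟩
  · rintro ⟨q, hq, (rfl | rfl | rfl | rfl)⟩
    · exact ⟨D1, (supp_fg f g hf hg D1).mpr (Or.inl rfl), q, hq, by rw [castD1]⟩
    · exact ⟨D2, (supp_fg f g hf hg D2).mpr (Or.inr (Or.inl rfl)), q, hq, by rw [castD2]⟩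
    · exact ⟨D3, (supp_fg f g hf hg D3).mpr (Or.inr (Or.inr (Or.inl rfl))), q, hq, by rw [castD3]⟩
    · exact ⟨D4, (supp_fg f g hf hg D4).mpr (Or.inr (Or.inr (Or.inr rfl))), q, hq, by rw [castD4]⟩

lemma gen_lower_fg (f g : MvPolynomial (Fin 3) K)
    (hf : f = X 0 ^ 2 - X 1 ^ 3) (hg : g = X 0 ^ 4 - X 2 ^ 5)
    (v : V3) (hv : ∀ i, 0 ≤ v i) (μ : ℝ)
    (h1 : μ ≤ dot v P1) (h2 : μ ≤ dot v P2) (h3 : μ ≤ dot v P3) (h4 : μ ≤ dot v P4) :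
    ∀ w ∈ gen (f * g), μ ≤ dot v w := by
  intro w hw
  rw [gen_fg_iff f g hf hg] at hw
  obtain ⟨q, hq, hc⟩ := hw
  have hnn := dot_nonneg' v q hv hq
  rcases hc with rfl | rfl | rfl | rfl <;> rw [dot_add] <;> linarith

end Poly
end Conc
section Conc2
open MvPolynomial Finset Module

variable {K : Type*} [Field K]

lemma Pk_gen (f g : MvPolynomial (Fin 3) K)
    (hf : f = X 0 ^ 2 - X 1 ^ 3) (hg : g = X 0 ^ 4 - X 2 ^ 5) (q : V3) (hq : ∀ i, 0 ≤ q i) :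
    P1 + q ∈ gen (f * g) ∧ P2 + q ∈ gen (f * g) ∧ P3 + q ∈ gen (f * g) ∧ P4 + q ∈ gen (f * g) :=
  ⟨(gen_fg_iff f g hf hg _).mpr ⟨q, hq, Or.inl rfl⟩,
   (gen_fg_iff f g hf hg _).mpr ⟨q, hq, Or.inr (Or.inl rfl)⟩,
   (gen_fg_iff f g hf hg _).mpr ⟨q, hq, Or.inr (Or.inr (Or.inl rfl))⟩,
   (gen_fg_iff f g hf hg _).mpr ⟨q, hq, Or.inr (Or.inr (Or.inr rfl))⟩⟩

lemma add_zero_V3 (P : V3) : P + (0 : V3) = P := by funext i; simp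

lemma Pk_gen0 (f g : MvPolynomial (Fin 3) K)
    (hf : f = X 0 ^ 2 - X 1 ^ 3) (hg : g = X 0 ^ 4 - X 2 ^ 5) :
    P1 ∈ gen (f * g) ∧ P2 ∈ gen (f * g) ∧ P3 ∈ gen (f * g) ∧ P4 ∈ gen (f * g) := by
  have := Pk_gen f g hf hg 0 (fun i => le_refl 0)
  rwa [add_zero_V3, add_zero_V3, add_zero_V3, add_zero_V3] at this

-- linear independence of the needed pairs
lemma li_e2_e3 : LinearIndependent ℝ ![![(0:ℝ),1,0], ![0,0,1]] := by
  rw [LinearIndependent.pair_iff]; intro s t hst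
  have h0 := congrFun hst 1; have h1 := congrFun hst 2
  simp at h0 h1; exact ⟨h0, h1⟩
lemma li_e1_e3 : LinearIndependent ℝ ![![(1:ℝ),0,0], ![0,0,1]] := by
  rw [LinearIndependent.pair_iff]; intro s t hst
  have h0 := congrFun hst 0; have h1 := congrFun hst 2
  simp at h0 h1; exact ⟨h0, h1⟩
lemma li_e1_e2 : LinearIndependent ℝ ![![(1:ℝ),0,0], ![0,1,0]] := by
  rw [LinearIndependent.pair_iff]; intro s t hst
  have h0 := congrFun hst 0; have h1 := congrFun hst 1
  simp at h0 h1; exact ⟨h0, h1⟩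
lemma li_u4 : LinearIndependent ℝ ![![(-2:ℝ),3,0], ![0,0,1]] := by
  rw [LinearIndependent.pair_iff]; intro s t hst
  have h0 := congrFun hst 0; have h1 := congrFun hst 2
  simp at h0 h1; exact ⟨by linarith, h1⟩
lemma li_u5 : LinearIndependent ℝ ![![(-4:ℝ),0,5], ![0,1,0]] := by
  rw [LinearIndependent.pair_iff]; intro s t hst
  have h0 := congrFun hst 0; have h1 := congrFun hst 1
  simp at h0 h1; exact ⟨by linarith, h1⟩
lemma li_u6 : LinearIndependent ℝ ![![(-2:ℝ),3,0], ![-4,0,5]] := by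
  rw [LinearIndependent.pair_iff]; intro s t hst
  have h0 := congrFun hst 1; have h1 := congrFun hst 2
  simp at h0 h1
  constructor <;> linarith

-- funext helpers
lemma P_add_eq (P q : V3) (h0 : q 0 = 0) (h1 : q 1 = 0) (h2 : q 2 = 0) : P + q = P := by
  funext i
  have : q i = 0 := by fin_cases i <;> assumption
  simp [this]

lemma q_line_e1 (P q : V3) (h1 : q 1 = 0) (h2 : q 2 = 0) :
    P + q = P + (q 0) • ![1,0,0] := by
  funext i; fin_cases i <;> simp [h1, h2]
lemma q_line_e2 (P q : V3) (h0 : q 0 = 0) (h2 : q 2 = 0) :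
    P + q = P + (q 1) • ![0,1,0] := by
  funext i; fin_cases i <;> simp [h0, h2]
lemma q_line_e3 (P q : V3) (h0 : q 0 = 0) (h1 : q 1 = 0) :
    P + q = P + (q 2) • ![0,0,1] := by
  funext i; fin_cases i <;> simp [h0, h1]

lemma P2_eq : P2 = P1 + (1:ℝ) • ![-2,3,0] := by
  funext i; fin_cases i <;> norm_num [P1, P2]
lemma P3_eq : P3 = P1 + (1:ℝ) • ![-4,0,5] := by
  funext i; fin_cases i <;> norm_num [P1, P3]
lemma P4_eq3 : P4 = P3 + (1:ℝ) • ![-2,3,0] := by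
  funext i; fin_cases i <;> norm_num [P3, P4]
lemma P4_eq2 : P4 = P2 + (1:ℝ) • ![-4,0,5] := by
  funext i; fin_cases i <;> norm_num [P2, P4]
lemma P4_eq3' : P3 + ![(-2:ℝ),3,0] = P4 := by
  funext i; fin_cases i <;> norm_num [P3, P4]
lemma P4_eq2' : P2 + ![(-4:ℝ),0,5] = P4 := by
  funext i; fin_cases i <;> norm_num [P2, P4]
lemma P2_eq' : P1 + ![(-2:ℝ),3,0] = P2 := by
  funext i; fin_cases i <;> norm_num [P1, P2]
lemma P3_eq' : P1 + ![(-4:ℝ),0,5] = P3 := by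
  funext i; fin_cases i <;> norm_num [P1, P3]

-- support of f and of g
lemma supp_f (f : MvPolynomial (Fin 3) K) (hf : f = X 0 ^ 2 - X 1 ^ 3) :
    ∀ d, d ∈ f.support ↔ (d = Finsupp.single 0 2 ∨ d = Finsupp.single 1 3) := by
  intro d
  have hne : (Finsupp.single 0 2 : Fin 3 →₀ ℕ) ≠ Finsupp.single 1 3 := by
    intro h
    have := DFunLike.congr_fun h 0
    simp [Finsupp.single_apply] at this
  have e : f = monomial (Finsupp.single 0 2) 1 + monomial (Finsupp.single 1 3) (-1) := by
    rw [hf, X_pow_eq_monomial, X_pow_eq_monomial]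
    simp [map_neg]
    ring
  rw [e, MvPolynomial.mem_support_iff]
  simp only [coeff_add, coeff_monomial]
  constructor
  · intro hne'
    by_contra hd
    push_neg at hd
    simp [Ne.symm hd.1, Ne.symm hd.2] at hne'
  · rintro (rfl | rfl) <;> simp [hne, Ne.symm hne]

lemma supp_g (g : MvPolynomial (Fin 3) K) (hg : g = X 0 ^ 4 - X 2 ^ 5) :
    ∀ d, d ∈ g.support ↔ (d = Finsupp.single 0 4 ∨ d = Finsupp.single 2 5) := by
  intro d
  have hne : (Finsupp.single 0 4 : Fin 3 →₀ ℕ) ≠ Finsupp.single 2 5 := by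
    intro h
    have := DFunLike.congr_fun h 0
    simp [Finsupp.single_apply] at this
  have e : g = monomial (Finsupp.single 0 4) 1 + monomial (Finsupp.single 2 5) (-1) := by
    rw [hg, X_pow_eq_monomial, X_pow_eq_monomial]
    simp [map_neg]
    ring
  rw [e, MvPolynomial.mem_support_iff]
  simp only [coeff_add, coeff_monomial]
  constructor
  · intro hne'
    by_contra hd
    push_neg at hd
    simp [Ne.symm hd.1, Ne.symm hd.2] at hne'
  · rintro (rfl | rfl) <;> simp [hne, Ne.symm hne]

noncomputable def Pf1 : V3 := ![2, 0, 0]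
noncomputable def Pf2 : V3 := ![0, 3, 0]
noncomputable def Pg1 : V3 := ![4, 0, 0]
noncomputable def Pg2 : V3 := ![0, 0, 5]

lemma gen_f_iff (f : MvPolynomial (Fin 3) K) (hf : f = X 0 ^ 2 - X 1 ^ 3) (w : V3) :
    w ∈ gen f ↔ ∃ q : V3, (∀ i, 0 ≤ q i) ∧ (w = Pf1 + q ∨ w = Pf2 + q) := by
  have c1 : (fun i => ((Finsupp.single 0 2 : Fin 3 →₀ ℕ) i : ℝ)) = Pf1 := by
    funext i; fin_cases i <;> simp [Pf1, Finsupp.single_apply]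
  have c2 : (fun i => ((Finsupp.single 1 3 : Fin 3 →₀ ℕ) i : ℝ)) = Pf2 := by
    funext i; fin_cases i <;> simp [Pf2, Finsupp.single_apply]
  constructor
  · rintro ⟨d, hd, q, hq, rfl⟩
    rw [supp_f f hf] at hd
    rcases hd with rfl | rfl
    · exact ⟨q, hq, Or.inl (by rw [c1])⟩
    · exact ⟨q, hq, Or.inr (by rw [c2])⟩
  · rintro ⟨q, hq, (rfl | rfl)⟩
    · exact ⟨_, (supp_f f hf _).mpr (Or.inl rfl), q, hq, by rw [c1]⟩
    · exact ⟨_, (supp_f f hf _).mpr (Or.inr rfl), q, hq, by rw [c2]⟩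

lemma gen_g_iff (g : MvPolynomial (Fin 3) K) (hg : g = X 0 ^ 4 - X 2 ^ 5) (w : V3) :
    w ∈ gen g ↔ ∃ q : V3, (∀ i, 0 ≤ q i) ∧ (w = Pg1 + q ∨ w = Pg2 + q) := by
  have c1 : (fun i => ((Finsupp.single 0 4 : Fin 3 →₀ ℕ) i : ℝ)) = Pg1 := by
    funext i; fin_cases i <;> simp [Pg1, Finsupp.single_apply]
  have c2 : (fun i => ((Finsupp.single 2 5 : Fin 3 →₀ ℕ) i : ℝ)) = Pg2 := by
    funext i; fin_cases i <;> simp [Pg2, Finsupp.single_apply]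
  constructor
  · rintro ⟨d, hd, q, hq, rfl⟩
    rw [supp_g g hg] at hd
    rcases hd with rfl | rfl
    · exact ⟨q, hq, Or.inl (by rw [c1])⟩
    · exact ⟨q, hq, Or.inr (by rw [c2])⟩
  · rintro ⟨q, hq, (rfl | rfl)⟩
    · exact ⟨_, (supp_g g hg _).mpr (Or.inl rfl), q, hq, by rw [c1]⟩
    · exact ⟨_, (supp_g g hg _).mpr (Or.inr rfl), q, hq, by rw [c2]⟩

end Conc2
section Conc3
open MvPolynomial Finset Module

lemma V3_ext (w w' : V3) (h0 : w 0 = w' 0) (h1 : w 1 = w' 1) (h2 : w 2 = w' 2) : w = w' := by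
  funext i
  fin_cases i
  · exact h0
  · exact h1
  · exact h2

lemma self_line (p d : V3) : p = p + (0:ℝ) • d := by funext i; simp

lemma Pf2_eq : (![0, 3, 0] : V3) = ![2, 0, 0] + (1:ℝ) • ![-2,3,0] := by
  funext i; fin_cases i <;> norm_num
lemma Pg2_eq : (![0, 0, 5] : V3) = ![4, 0, 0] + (1:ℝ) • ![-4,0,5] := by
  funext i; fin_cases i <;> norm_num

end Conc3
set_option maxHeartbeats 2000000 in
open Finset Module in
theorem stmt17 {K : Type*} [Field K]
    (f g : MvPolynomial (Fin 3) K)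
    (hf : f = X 0 ^ 2 - X 1 ^ 3) (hg : g = X 0 ^ 4 - X 2 ^ 5)
    (face : MvPolynomial (Fin 3) K → (Fin 3 → ℝ) → Set (Fin 3 → ℝ))
    (hface : ∀ h v, face h v = {w ∈ NewtonPolyhedron h |
        ∀ u ∈ NewtonPolyhedron h, ∑ k, v k * w k ≤ ∑ k, v k * u k}) :
    Set.extremePoints ℝ (NewtonPolyhedron (f * g)) =
      {![(6:ℝ), 0, 0], ![0, 3, 5], ![2, 0, 5], ![4, 3, 0]} ∧
    (∀ v : Fin 3 → ℝ, (∀ i, 0 ≤ v i) → v ≠ 0 →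
      (Module.finrank ℝ (vectorSpan ℝ (face (f * g) v)) = 2 ↔
        ∃ c : ℝ, 0 < c ∧ (v = c • ![1, 0, 0] ∨ v = c • ![0, 1, 0] ∨
          v = c • ![0, 0, 1] ∨ v = c • ![3, 2, 0] ∨ v = c • ![5, 0, 4] ∨
          v = c • ![15, 10, 12]))) ∧
    Module.finrank ℝ (vectorSpan ℝ (face f ![15, 10, 12])) ≠ 2 ∧
    Module.finrank ℝ (vectorSpan ℝ (face g ![15, 10, 12])) ≠ 2 := by
  have hFace : ∀ h v, face h v = Face h v := by
    intro h v
    rw [hface]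
    rfl
  obtain ⟨g1, g2, g3, g4⟩ := Pk_gen0 f g hf hg
  refine ⟨?_, ?_, ?_, ?_⟩
  · -- extreme points
    ext x
    constructor
    · intro hx
      have hx' : x ∈ gen (f * g) := extremePoints_convexHull_subset hx
      rw [gen_fg_iff f g hf hg] at hx'
      obtain ⟨q, hq, hc⟩ := hx'
      have h2q : ∀ i, (0:ℝ) ≤ ((2:ℝ) • q) i := by
        intro i
        have := hq i
        simp only [Pi.smul_apply, smul_eq_mul]
        linarith
      have key : ∀ P : V3, P ∈ gen (f * g) → P + (2:ℝ) • q ∈ gen (f * g) → x = P + q → x = P := by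
        rintro P hP hP2 rfl
        have hseg : P + q ∈ openSegment ℝ P (P + (2:ℝ) • q) :=
          ⟨1/2, 1/2, by norm_num, by norm_num, by norm_num, by module⟩
        have := hx.2 (subset_convexHull ℝ _ hP) (subset_convexHull ℝ _ hP2) hseg
        exact this.symm
      obtain ⟨k1, k2, k3, k4⟩ := Pk_gen f g hf hg ((2:ℝ) • q) h2q
      simp only [Set.mem_insert_iff, Set.mem_singleton_iff]
      rcases hc with hc | hc | hc | hc
      · exact Or.inl (key P1 g1 k1 hc)
      · exact Or.inr (Or.inr (Or.inr (key P2 g2 k2 hc)))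
      · exact Or.inr (Or.inr (Or.inl (key P3 g3 k3 hc)))
      · exact Or.inr (Or.inl (key P4 g4 k4 hc))
    · intro hx
      simp only [Set.mem_insert_iff, Set.mem_singleton_iff] at hx
      have q_zero : ∀ (v : V3), (0 < v 0) → (0 < v 1) → (0 < v 2) →
          ∀ q : V3, (∀ i, 0 ≤ q i) → dot v q = 0 → ∀ P : V3, P + q = P := by
        intro v h0 h1 h2 q hq hdq P
        have e := dot_expand v q
        have t0 := mul_nonneg h0.le (hq 0)
        have t1 := mul_nonneg h1.le (hq 1)
        have t2 := mul_nonneg h2.le (hq 2)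
        have z0 : v 0 * q 0 = 0 := by linarith
        have z1 : v 1 * q 1 = 0 := by linarith
        have z2 : v 2 * q 2 = 0 := by linarith
        exact P_add_eq P q ((mul_eq_zero.mp z0).resolve_left (ne_of_gt h0))
          ((mul_eq_zero.mp z1).resolve_left (ne_of_gt h1))
          ((mul_eq_zero.mp z2).resolve_left (ne_of_gt h2))
      rcases hx with rfl | rfl | rfl | rfl
      · -- P1 with v = ![1,10,10]
        refine mem_extreme_of_unique (f*g) P1 ![1,10,10] 6 g1 (by rw [dotP1]; norm_num) ?_ ?_
        · refine gen_lower_fg f g hf hg _ (by intro i; fin_cases i <;> norm_num) 6 ?_ ?_ ?_ ?_ <;>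
            simp [dotP1, dotP2, dotP3, dotP4] <;> norm_num
        · intro w hw hwμ
          rw [gen_fg_iff f g hf hg] at hw
          obtain ⟨q, hq, hc⟩ := hw
          have hnn : 0 ≤ dot ![1,10,10] q :=
            dot_nonneg' _ q (by intro i; fin_cases i <;> norm_num) hq
          rcases hc with rfl | rfl | rfl | rfl <;> rw [dot_add] at hwμ <;>
            [rw [dotP1] at hwμ; rw [dotP2] at hwμ; rw [dotP3] at hwμ; rw [dotP4] at hwμ] <;>
            simp only [Matrix.cons_val_zero, Matrix.cons_val_one, Matrix.head_cons,
              Matrix.cons_val_two, Matrix.tail_cons] at hwμ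
          · exact q_zero ![1,10,10] (by norm_num) (by norm_num) (by norm_num) q hq
              (by linarith) P1
          · exfalso; linarith
          · exfalso; linarith
          · exfalso; linarith
      · -- P4 with v = ![10,1,1]
        refine mem_extreme_of_unique (f*g) P4 ![10,1,1] 8 g4 (by rw [dotP4]; norm_num) ?_ ?_
        · refine gen_lower_fg f g hf hg _ (by intro i; fin_cases i <;> norm_num) 8 ?_ ?_ ?_ ?_ <;>
            simp [dotP1, dotP2, dotP3, dotP4] <;> norm_num
        · intro w hw hwμ
          rw [gen_fg_iff f g hf hg] at hw
          obtain ⟨q, hq, hc⟩ := hw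
          have hnn : 0 ≤ dot ![10,1,1] q :=
            dot_nonneg' _ q (by intro i; fin_cases i <;> norm_num) hq
          rcases hc with rfl | rfl | rfl | rfl <;> rw [dot_add] at hwμ <;>
            [rw [dotP1] at hwμ; rw [dotP2] at hwμ; rw [dotP3] at hwμ; rw [dotP4] at hwμ] <;>
            simp only [Matrix.cons_val_zero, Matrix.cons_val_one, Matrix.head_cons,
              Matrix.cons_val_two, Matrix.tail_cons] at hwμ
          · exfalso; linarith
          · exfalso; linarith
          · exfalso; linarith
          · exact q_zero ![10,1,1] (by norm_num) (by norm_num) (by norm_num) q hq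
              (by linarith) P4
      · -- P3 with v = ![2,2,1]
        refine mem_extreme_of_unique (f*g) P3 ![2,2,1] 9 g3 (by rw [dotP3]; norm_num) ?_ ?_
        · refine gen_lower_fg f g hf hg _ (by intro i; fin_cases i <;> norm_num) 9 ?_ ?_ ?_ ?_ <;>
            simp [dotP1, dotP2, dotP3, dotP4] <;> norm_num
        · intro w hw hwμ
          rw [gen_fg_iff f g hf hg] at hw
          obtain ⟨q, hq, hc⟩ := hw
          have hnn : 0 ≤ dot ![2,2,1] q :=
            dot_nonneg' _ q (by intro i; fin_cases i <;> norm_num) hq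
          rcases hc with rfl | rfl | rfl | rfl <;> rw [dot_add] at hwμ <;>
            [rw [dotP1] at hwμ; rw [dotP2] at hwμ; rw [dotP3] at hwμ; rw [dotP4] at hwμ] <;>
            simp only [Matrix.cons_val_zero, Matrix.cons_val_one, Matrix.head_cons,
              Matrix.cons_val_two, Matrix.tail_cons] at hwμ
          · exfalso; linarith
          · exfalso; linarith
          · exact q_zero ![2,2,1] (by norm_num) (by norm_num) (by norm_num) q hq
              (by linarith) P3
          · exfalso; linarith
      · -- P2 with v = ![3,1,12]
        refine mem_extreme_of_unique (f*g) P2 ![3,1,12] 15 g2 (by rw [dotP2]; norm_num) ?_ ?_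
        · refine gen_lower_fg f g hf hg _ (by intro i; fin_cases i <;> norm_num) 15 ?_ ?_ ?_ ?_ <;>
            simp [dotP1, dotP2, dotP3, dotP4] <;> norm_num
        · intro w hw hwμ
          rw [gen_fg_iff f g hf hg] at hw
          obtain ⟨q, hq, hc⟩ := hw
          have hnn : 0 ≤ dot ![3,1,12] q :=
            dot_nonneg' _ q (by intro i; fin_cases i <;> norm_num) hq
          rcases hc with rfl | rfl | rfl | rfl <;> rw [dot_add] at hwμ <;>
            [rw [dotP1] at hwμ; rw [dotP2] at hwμ; rw [dotP3] at hwμ; rw [dotP4] at hwμ] <;>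
            simp only [Matrix.cons_val_zero, Matrix.cons_val_one, Matrix.head_cons,
              Matrix.cons_val_two, Matrix.tail_cons] at hwμ
          · exfalso; linarith
          · exact q_zero ![3,1,12] (by norm_num) (by norm_num) (by norm_num) q hq
              (by linarith) P2
          · exfalso; linarith
          · exfalso; linarith
  · -- facet characterization
    intro v hv hvne
    have he1 : ∀ i, (0:ℝ) ≤ (![1,0,0] : V3) i := by intro i; fin_cases i <;> norm_num
    have he2 : ∀ i, (0:ℝ) ≤ (![0,1,0] : V3) i := by intro i; fin_cases i <;> norm_num
    have he3 : ∀ i, (0:ℝ) ≤ (![0,0,1] : V3) i := by intro i; fin_cases i <;> norm_num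
    constructor
    · -- forward: rank 2 → v is one of the six normals
      intro hrank
      rw [hFace] at hrank
      have hcontra : ∀ (p d w₀ : V3) (μ : ℝ), dot v p = μ → dot v d = 0 →
          (∀ w ∈ gen (f*g), (∃ t:ℝ, w = p + t • d) ∨ μ < dot v w) →
          w₀ ∈ gen (f*g) → dot v w₀ = μ → False := by
        intro p d w₀ μ h1 h2 h3 h4 h5
        have := Face_line_rank (f*g) v p d μ h1 h2 h3 w₀ h4 h5
        omega
      have hqz : ∀ q : V3, (∀ i, 0 ≤ q i) → 0 = dot v q →
          (v 0 * q 0 = 0 ∧ v 1 * q 1 = 0 ∧ v 2 * q 2 = 0) := by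
        intro q hq h0
        have e := dot_expand v q
        have t0 := mul_nonneg (hv 0) (hq 0)
        have t1 := mul_nonneg (hv 1) (hq 1)
        have t2 := mul_nonneg (hv 2) (hq 2)
        exact ⟨by linarith, by linarith, by linarith⟩
      rcases eq_or_lt_of_le (hv 0) with ha | ha
      · rcases eq_or_lt_of_le (hv 1) with hb | hb
        · rcases eq_or_lt_of_le (hv 2) with hcc | hcc
          · exact absurd (V3_ext v 0 ha.symm hb.symm hcc.symm) hvne
          · -- v = (v 2) • e3
            exact ⟨v 2, hcc, Or.inr (Or.inr (Or.inl (V3_ext _ _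
              (by simp; linarith) (by simp; linarith) (by simp))))⟩
        · rcases eq_or_lt_of_le (hv 2) with hcc | hcc
          · -- v = (v 1) • e2
            exact ⟨v 1, hb, Or.inr (Or.inl (V3_ext _ _
              (by simp; linarith) (by simp) (by simp; linarith)))⟩
          · -- a = 0, b > 0, c > 0 : face is the ray P1 + t e1
            exfalso
            refine hcontra P1 ![1,0,0] P1 0 (by rw [dotP1]; linarith)
              (by rw [dot_expand]; simp; linarith) ?_ g1 (by rw [dotP1]; linarith)
            intro w hw
            rw [gen_fg_iff f g hf hg] at hw
            obtain ⟨q, hq, hcase⟩ := hw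
            have hnn := dot_nonneg' v q hv hq
            rcases hcase with rfl | rfl | rfl | rfl
            · rcases lt_or_eq_of_le hnn with hpos | hzero
              · right; rw [dot_add, dotP1]; linarith
              · obtain ⟨z0, z1, z2⟩ := hqz q hq hzero
                exact Or.inl ⟨q 0, q_line_e1 P1 q
                  ((mul_eq_zero.mp z1).resolve_left (ne_of_gt hb))
                  ((mul_eq_zero.mp z2).resolve_left (ne_of_gt hcc))⟩
            · right; rw [dot_add, dotP2]; linarith
            · right; rw [dot_add, dotP3]; linarith
            · right; rw [dot_add, dotP4]; linarith
      · rcases eq_or_lt_of_le (hv 1) with hb | hb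
        · rcases eq_or_lt_of_le (hv 2) with hcc | hcc
          · -- v = (v 0) • e1
            exact ⟨v 0, ha, Or.inl (V3_ext _ _
              (by simp) (by simp; linarith) (by simp; linarith))⟩
          · -- a > 0, b = 0, c > 0 : compare 4a and 5c
            rcases lt_trichotomy (4 * v 0) (5 * v 2) with h45 | h45 | h45
            · -- face is P2 + t e2
              exfalso
              refine hcontra P2 ![0,1,0] P2 (4 * v 0) (by rw [dotP2]; linarith)
                (by rw [dot_expand]; simp; linarith) ?_ g2 (by rw [dotP2]; linarith)
              intro w hw
              rw [gen_fg_iff f g hf hg] at hw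
              obtain ⟨q, hq, hcase⟩ := hw
              have hnn := dot_nonneg' v q hv hq
              rcases hcase with rfl | rfl | rfl | rfl
              · right; rw [dot_add, dotP1]; linarith
              · rcases lt_or_eq_of_le hnn with hpos | hzero
                · right; rw [dot_add, dotP2]; linarith
                · obtain ⟨z0, z1, z2⟩ := hqz q hq hzero
                  exact Or.inl ⟨q 1, q_line_e2 P2 q
                    ((mul_eq_zero.mp z0).resolve_left (ne_of_gt ha))
                    ((mul_eq_zero.mp z2).resolve_left (ne_of_gt hcc))⟩
              · right; rw [dot_add, dotP3]; linarith
              · right; rw [dot_add, dotP4]; linarith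
            · -- v ∝ (5,0,4)
              refine ⟨v 0 / 5, by linarith, Or.inr (Or.inr (Or.inr (Or.inr (Or.inl
                (V3_ext _ _ (by simp; try ring) (by simp; linarith) (by simp; linarith))))))⟩
            · -- face is P4 + t e2
              exfalso
              refine hcontra P4 ![0,1,0] P4 (5 * v 2) (by rw [dotP4]; linarith)
                (by rw [dot_expand]; simp; linarith) ?_ g4 (by rw [dotP4]; linarith)
              intro w hw
              rw [gen_fg_iff f g hf hg] at hw
              obtain ⟨q, hq, hcase⟩ := hw
              have hnn := dot_nonneg' v q hv hq
              rcases hcase with rfl | rfl | rfl | rfl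
              · right; rw [dot_add, dotP1]; linarith
              · right; rw [dot_add, dotP2]; linarith
              · right; rw [dot_add, dotP3]; linarith
              · rcases lt_or_eq_of_le hnn with hpos | hzero
                · right; rw [dot_add, dotP4]; linarith
                · obtain ⟨z0, z1, z2⟩ := hqz q hq hzero
                  exact Or.inl ⟨q 1, q_line_e2 P4 q
                    ((mul_eq_zero.mp z0).resolve_left (ne_of_gt ha))
                    ((mul_eq_zero.mp z2).resolve_left (ne_of_gt hcc))⟩
        · rcases eq_or_lt_of_le (hv 2) with hcc | hcc
          · -- a > 0, b > 0, c = 0 : compare 2a and 3b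
            rcases lt_trichotomy (2 * v 0) (3 * v 1) with h23 | h23 | h23
            · -- face is P3 + t e3
              exfalso
              refine hcontra P3 ![0,0,1] P3 (2 * v 0) (by rw [dotP3]; linarith)
                (by rw [dot_expand]; simp; linarith) ?_ g3 (by rw [dotP3]; linarith)
              intro w hw
              rw [gen_fg_iff f g hf hg] at hw
              obtain ⟨q, hq, hcase⟩ := hw
              have hnn := dot_nonneg' v q hv hq
              rcases hcase with rfl | rfl | rfl | rfl
              · right; rw [dot_add, dotP1]; linarith
              · right; rw [dot_add, dotP2]; linarith
              · rcases lt_or_eq_of_le hnn with hpos | hzero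
                · right; rw [dot_add, dotP3]; linarith
                · obtain ⟨z0, z1, z2⟩ := hqz q hq hzero
                  exact Or.inl ⟨q 2, q_line_e3 P3 q
                    ((mul_eq_zero.mp z0).resolve_left (ne_of_gt ha))
                    ((mul_eq_zero.mp z1).resolve_left (ne_of_gt hb))⟩
              · right; rw [dot_add, dotP4]; linarith
            · -- v ∝ (3,2,0)
              refine ⟨v 0 / 3, by linarith, Or.inr (Or.inr (Or.inr (Or.inl
                (V3_ext _ _ (by simp; try ring) (by simp; linarith) (by simp; linarith)))))⟩
            · -- face is P4 + t e3
              exfalso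
              refine hcontra P4 ![0,0,1] P4 (3 * v 1) (by rw [dotP4]; linarith)
                (by rw [dot_expand]; simp; linarith) ?_ g4 (by rw [dotP4]; linarith)
              intro w hw
              rw [gen_fg_iff f g hf hg] at hw
              obtain ⟨q, hq, hcase⟩ := hw
              have hnn := dot_nonneg' v q hv hq
              rcases hcase with rfl | rfl | rfl | rfl
              · right; rw [dot_add, dotP1]; linarith
              · right; rw [dot_add, dotP2]; linarith
              · right; rw [dot_add, dotP3]; linarith
              · rcases lt_or_eq_of_le hnn with hpos | hzero
                · right; rw [dot_add, dotP4]; linarith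
                · obtain ⟨z0, z1, z2⟩ := hqz q hq hzero
                  exact Or.inl ⟨q 2, q_line_e3 P4 q
                    ((mul_eq_zero.mp z0).resolve_left (ne_of_gt ha))
                    ((mul_eq_zero.mp z1).resolve_left (ne_of_gt hb))⟩
          · -- all positive
            have hq0sub : ∀ q : V3, (∀ i, 0 ≤ q i) → 0 = dot v q →
                q 0 = 0 ∧ q 1 = 0 ∧ q 2 = 0 := by
              intro q hq hzero
              obtain ⟨z0, z1, z2⟩ := hqz q hq hzero
              exact ⟨(mul_eq_zero.mp z0).resolve_left (ne_of_gt ha),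
                (mul_eq_zero.mp z1).resolve_left (ne_of_gt hb),
                (mul_eq_zero.mp z2).resolve_left (ne_of_gt hcc)⟩
            rcases lt_trichotomy (2 * v 0) (3 * v 1) with h23 | h23 | h23 <;>
              rcases lt_trichotomy (4 * v 0) (5 * v 2) with h45 | h45 | h45
            · -- (<,<) : vertex P1
              exfalso
              refine hcontra P1 0 P1 (6 * v 0) (dotP1 v)
                (by rw [dot_expand]; simp) ?_ g1 (dotP1 v)
              intro w hw
              rw [gen_fg_iff f g hf hg] at hw
              obtain ⟨q, hq, hcase⟩ := hw
              have hnn := dot_nonneg' v q hv hq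
              rcases hcase with rfl | rfl | rfl | rfl
              · rcases lt_or_eq_of_le hnn with hpos | hzero
                · right; rw [dot_add, dotP1]; linarith
                · obtain ⟨z0, z1, z2⟩ := hq0sub q hq hzero
                  exact Or.inl ⟨0, by rw [P_add_eq P1 q z0 z1 z2]; exact self_line P1 0⟩
              · right; rw [dot_add, dotP2]; linarith
              · right; rw [dot_add, dotP3]; linarith
              · right; rw [dot_add, dotP4]; linarith
            · -- (<,=) : edge P1 P3
              exfalso
              refine hcontra P1 ![-4,0,5] P1 (6 * v 0) (dotP1 v)
                (by rw [dot_expand]; simp; linarith) ?_ g1 (dotP1 v)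
              intro w hw
              rw [gen_fg_iff f g hf hg] at hw
              obtain ⟨q, hq, hcase⟩ := hw
              have hnn := dot_nonneg' v q hv hq
              rcases hcase with rfl | rfl | rfl | rfl
              · rcases lt_or_eq_of_le hnn with hpos | hzero
                · right; rw [dot_add, dotP1]; linarith
                · obtain ⟨z0, z1, z2⟩ := hq0sub q hq hzero
                  exact Or.inl ⟨0, by rw [P_add_eq P1 q z0 z1 z2]; exact self_line P1 _⟩
              · right; rw [dot_add, dotP2]; linarith
              · rcases lt_or_eq_of_le hnn with hpos | hzero
                · right; rw [dot_add, dotP3]; linarith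
                · obtain ⟨z0, z1, z2⟩ := hq0sub q hq hzero
                  exact Or.inl ⟨1, by rw [P_add_eq P3 q z0 z1 z2]; exact P3_eq⟩
              · right; rw [dot_add, dotP4]; linarith
            · -- (<,>) : vertex P3
              exfalso
              refine hcontra P3 0 P3 (2 * v 0 + 5 * v 2) (dotP3 v)
                (by rw [dot_expand]; simp) ?_ g3 (dotP3 v)
              intro w hw
              rw [gen_fg_iff f g hf hg] at hw
              obtain ⟨q, hq, hcase⟩ := hw
              have hnn := dot_nonneg' v q hv hq
              rcases hcase with rfl | rfl | rfl | rfl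
              · right; rw [dot_add, dotP1]; linarith
              · right; rw [dot_add, dotP2]; linarith
              · rcases lt_or_eq_of_le hnn with hpos | hzero
                · right; rw [dot_add, dotP3]; linarith
                · obtain ⟨z0, z1, z2⟩ := hq0sub q hq hzero
                  exact Or.inl ⟨0, by rw [P_add_eq P3 q z0 z1 z2]; exact self_line P3 0⟩
              · right; rw [dot_add, dotP4]; linarith
            · -- (=,<) : edge P1 P2
              exfalso
              refine hcontra P1 ![-2,3,0] P1 (6 * v 0) (dotP1 v)
                (by rw [dot_expand]; simp; linarith) ?_ g1 (dotP1 v)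
              intro w hw
              rw [gen_fg_iff f g hf hg] at hw
              obtain ⟨q, hq, hcase⟩ := hw
              have hnn := dot_nonneg' v q hv hq
              rcases hcase with rfl | rfl | rfl | rfl
              · rcases lt_or_eq_of_le hnn with hpos | hzero
                · right; rw [dot_add, dotP1]; linarith
                · obtain ⟨z0, z1, z2⟩ := hq0sub q hq hzero
                  exact Or.inl ⟨0, by rw [P_add_eq P1 q z0 z1 z2]; exact self_line P1 _⟩
              · rcases lt_or_eq_of_le hnn with hpos | hzero
                · right; rw [dot_add, dotP2]; linarith
                · obtain ⟨z0, z1, z2⟩ := hq0sub q hq hzero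
                  exact Or.inl ⟨1, by rw [P_add_eq P2 q z0 z1 z2]; exact P2_eq⟩
              · right; rw [dot_add, dotP3]; linarith
              · right; rw [dot_add, dotP4]; linarith
            · -- (=,=) : v ∝ (15,10,12)
              refine ⟨v 0 / 15, by linarith, Or.inr (Or.inr (Or.inr (Or.inr (Or.inr
                (V3_ext _ _ (by simp; try ring) (by simp; linarith) (by simp; linarith))))))⟩
            · -- (=,>) : edge P3 P4
              exfalso
              refine hcontra P3 ![-2,3,0] P3 (2 * v 0 + 5 * v 2) (dotP3 v)
                (by rw [dot_expand]; simp; linarith) ?_ g3 (dotP3 v)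
              intro w hw
              rw [gen_fg_iff f g hf hg] at hw
              obtain ⟨q, hq, hcase⟩ := hw
              have hnn := dot_nonneg' v q hv hq
              rcases hcase with rfl | rfl | rfl | rfl
              · right; rw [dot_add, dotP1]; linarith
              · right; rw [dot_add, dotP2]; linarith
              · rcases lt_or_eq_of_le hnn with hpos | hzero
                · right; rw [dot_add, dotP3]; linarith
                · obtain ⟨z0, z1, z2⟩ := hq0sub q hq hzero
                  exact Or.inl ⟨0, by rw [P_add_eq P3 q z0 z1 z2]; exact self_line P3 _⟩
              · rcases lt_or_eq_of_le hnn with hpos | hzero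
                · right; rw [dot_add, dotP4]; linarith
                · obtain ⟨z0, z1, z2⟩ := hq0sub q hq hzero
                  exact Or.inl ⟨1, by rw [P_add_eq P4 q z0 z1 z2]; exact P4_eq3⟩
            · -- (>,<) : vertex P2
              exfalso
              refine hcontra P2 0 P2 (4 * v 0 + 3 * v 1) (dotP2 v)
                (by rw [dot_expand]; simp) ?_ g2 (dotP2 v)
              intro w hw
              rw [gen_fg_iff f g hf hg] at hw
              obtain ⟨q, hq, hcase⟩ := hw
              have hnn := dot_nonneg' v q hv hq
              rcases hcase with rfl | rfl | rfl | rfl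
              · right; rw [dot_add, dotP1]; linarith
              · rcases lt_or_eq_of_le hnn with hpos | hzero
                · right; rw [dot_add, dotP2]; linarith
                · obtain ⟨z0, z1, z2⟩ := hq0sub q hq hzero
                  exact Or.inl ⟨0, by rw [P_add_eq P2 q z0 z1 z2]; exact self_line P2 0⟩
              · right; rw [dot_add, dotP3]; linarith
              · right; rw [dot_add, dotP4]; linarith
            · -- (>,=) : edge P2 P4
              exfalso
              refine hcontra P2 ![-4,0,5] P2 (4 * v 0 + 3 * v 1) (dotP2 v)
                (by rw [dot_expand]; simp; linarith) ?_ g2 (dotP2 v)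
              intro w hw
              rw [gen_fg_iff f g hf hg] at hw
              obtain ⟨q, hq, hcase⟩ := hw
              have hnn := dot_nonneg' v q hv hq
              rcases hcase with rfl | rfl | rfl | rfl
              · right; rw [dot_add, dotP1]; linarith
              · rcases lt_or_eq_of_le hnn with hpos | hzero
                · right; rw [dot_add, dotP2]; linarith
                · obtain ⟨z0, z1, z2⟩ := hq0sub q hq hzero
                  exact Or.inl ⟨0, by rw [P_add_eq P2 q z0 z1 z2]; exact self_line P2 _⟩
              · right; rw [dot_add, dotP3]; linarith
              · rcases lt_or_eq_of_le hnn with hpos | hzero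
                · right; rw [dot_add, dotP4]; linarith
                · obtain ⟨z0, z1, z2⟩ := hq0sub q hq hzero
                  exact Or.inl ⟨1, by rw [P_add_eq P4 q z0 z1 z2]; exact P4_eq2⟩
            · -- (>,>) : vertex P4
              exfalso
              refine hcontra P4 0 P4 (3 * v 1 + 5 * v 2) (dotP4 v)
                (by rw [dot_expand]; simp) ?_ g4 (dotP4 v)
              intro w hw
              rw [gen_fg_iff f g hf hg] at hw
              obtain ⟨q, hq, hcase⟩ := hw
              have hnn := dot_nonneg' v q hv hq
              rcases hcase with rfl | rfl | rfl | rfl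
              · right; rw [dot_add, dotP1]; linarith
              · right; rw [dot_add, dotP2]; linarith
              · right; rw [dot_add, dotP3]; linarith
              · rcases lt_or_eq_of_le hnn with hpos | hzero
                · right; rw [dot_add, dotP4]; linarith
                · obtain ⟨z0, z1, z2⟩ := hq0sub q hq hzero
                  exact Or.inl ⟨0, by rw [P_add_eq P4 q z0 z1 z2]; exact self_line P4 0⟩
    · -- backward: each listed normal gives a 2-dimensional face
      rintro ⟨c, hc, hn | hn | hn | hn | hn | hn⟩ <;>
        rw [hFace, hn, Face_smul _ _ c hc]
      · -- e1, face through P4 with rays e2 e3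
        refine Face_rank_two (f*g) ![1,0,0]
          (by intro h; have := congrFun h 0; norm_num at this) 0
          (gen_lower_fg f g hf hg _ he1 0 (by rw [dotP1]; norm_num) (by rw [dotP2]; norm_num)
            (by rw [dotP3]; norm_num) (by rw [dotP4]; norm_num))
          P4 ![0,1,0] ![0,0,1] g4 (by rw [dotP4]; norm_num)
          (Pk_gen f g hf hg ![0,1,0] he2).2.2.2
          (by rw [dot_add, dotP4, dot_expand]; norm_num)
          (Pk_gen f g hf hg ![0,0,1] he3).2.2.2
          (by rw [dot_add, dotP4, dot_expand]; norm_num) li_e2_e3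
      · -- e2, face through P1 with rays e1 e3
        refine Face_rank_two (f*g) ![0,1,0]
          (by intro h; have := congrFun h 1; norm_num at this) 0
          (gen_lower_fg f g hf hg _ he2 0 (by rw [dotP1]; norm_num) (by rw [dotP2]; norm_num)
            (by rw [dotP3]; norm_num) (by rw [dotP4]; norm_num))
          P1 ![1,0,0] ![0,0,1] g1 (by rw [dotP1]; norm_num)
          (Pk_gen f g hf hg ![1,0,0] he1).1
          (by rw [dot_add, dotP1, dot_expand]; norm_num)
          (Pk_gen f g hf hg ![0,0,1] he3).1
          (by rw [dot_add, dotP1, dot_expand]; norm_num) li_e1_e3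
      · -- e3, face through P1 with rays e1 e2
        refine Face_rank_two (f*g) ![0,0,1]
          (by intro h; have := congrFun h 2; norm_num at this) 0
          (gen_lower_fg f g hf hg _ he3 0 (by rw [dotP1]; norm_num) (by rw [dotP2]; norm_num)
            (by rw [dotP3]; norm_num) (by rw [dotP4]; norm_num))
          P1 ![1,0,0] ![0,1,0] g1 (by rw [dotP1]; norm_num)
          (Pk_gen f g hf hg ![1,0,0] he1).1
          (by rw [dot_add, dotP1, dot_expand]; norm_num)
          (Pk_gen f g hf hg ![0,1,0] he2).1
          (by rw [dot_add, dotP1, dot_expand]; norm_num) li_e1_e2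
      · -- (3,2,0), facet through P3, P4 and ray e3
        have hn4 : ∀ i, (0:ℝ) ≤ (![3,2,0] : V3) i := by intro i; fin_cases i <;> norm_num
        refine Face_rank_two (f*g) ![3,2,0]
          (by intro h; have := congrFun h 0; norm_num at this) 6
          (gen_lower_fg f g hf hg _ hn4 6 (by rw [dotP1]; norm_num) (by rw [dotP2]; norm_num)
            (by rw [dotP3]; norm_num) (by rw [dotP4]; norm_num))
          P3 ![-2,3,0] ![0,0,1] g3 (by rw [dotP3]; norm_num)
          (by rw [P4_eq3']; exact g4)
          (by rw [P4_eq3', dotP4]; norm_num)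
          (Pk_gen f g hf hg ![0,0,1] he3).2.2.1
          (by rw [dot_add, dotP3, dot_expand]; norm_num) li_u4
      · -- (5,0,4), facet through P2, P4 and ray e2
        have hn5 : ∀ i, (0:ℝ) ≤ (![5,0,4] : V3) i := by intro i; fin_cases i <;> norm_num
        refine Face_rank_two (f*g) ![5,0,4]
          (by intro h; have := congrFun h 0; norm_num at this) 20
          (gen_lower_fg f g hf hg _ hn5 20 (by rw [dotP1]; norm_num) (by rw [dotP2]; norm_num)
            (by rw [dotP3]; norm_num) (by rw [dotP4]; norm_num))
          P2 ![-4,0,5] ![0,1,0] g2 (by rw [dotP2]; norm_num)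
          (by rw [P4_eq2']; exact g4)
          (by rw [P4_eq2', dotP4]; norm_num)
          (Pk_gen f g hf hg ![0,1,0] he2).2.1
          (by rw [dot_add, dotP2, dot_expand]; norm_num) li_u5
      · -- (15,10,12), the compact facet through P1, P2, P3
        have hn6 : ∀ i, (0:ℝ) ≤ (![15,10,12] : V3) i := by intro i; fin_cases i <;> norm_num
        refine Face_rank_two (f*g) ![15,10,12]
          (by intro h; have := congrFun h 0; norm_num at this) 90
          (gen_lower_fg f g hf hg _ hn6 90 (by rw [dotP1]; norm_num) (by rw [dotP2]; norm_num)
            (by rw [dotP3]; norm_num) (by rw [dotP4]; norm_num))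
          P1 ![-2,3,0] ![-4,0,5] g1 (by rw [dotP1]; norm_num)
          (by rw [P2_eq']; exact g2)
          (by rw [P2_eq', dotP2]; norm_num)
          (by rw [P3_eq']; exact g3)
          (by rw [P3_eq', dotP3]; norm_num) li_u6
  · -- face of f at (15,10,12) is a segment
    rw [hFace]
    have hlt : ∀ q : V3, (∀ i, 0 ≤ q i) → 0 ≤ dot ![(15:ℝ),10,12] q := fun q hq =>
      dot_nonneg' _ q (by intro i; fin_cases i <;> norm_num) hq
    have hq0 : ∀ q : V3, (∀ i, 0 ≤ q i) → 0 = dot ![(15:ℝ),10,12] q →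
        q 0 = 0 ∧ q 1 = 0 ∧ q 2 = 0 := by
      intro q hq hzero
      have e := dot_expand ![(15:ℝ),10,12] q
      simp only [Matrix.cons_val_zero, Matrix.cons_val_one, Matrix.head_cons,
        Matrix.cons_val_two, Matrix.tail_cons] at e
      have := hq 0; have := hq 1; have := hq 2
      exact ⟨by linarith, by linarith, by linarith⟩
    have hPf1 : (Pf1 : V3) ∈ gen f := (gen_f_iff f hf Pf1).mpr
      ⟨0, fun i => le_refl 0, Or.inl (add_zero_V3 Pf1).symm⟩
    have hr := Face_line_rank f ![15,10,12] Pf1 ![-2,3,0] 30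
      (by rw [dot_expand]; norm_num [Pf1])
      (by rw [dot_expand]; norm_num) ?_ Pf1 hPf1 (by rw [dot_expand]; norm_num [Pf1])
    · omega
    · intro w hw
      rw [gen_f_iff f hf] at hw
      obtain ⟨q, hq, hcase⟩ := hw
      have hnn := hlt q hq
      have hd1 : dot ![(15:ℝ),10,12] Pf1 = 30 := by rw [dot_expand]; norm_num [Pf1]
      have hd2 : dot ![(15:ℝ),10,12] Pf2 = 30 := by rw [dot_expand]; norm_num [Pf2]
      rcases hcase with rfl | rfl
      · rcases lt_or_eq_of_le hnn with hpos | hzero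
        · right; rw [dot_add, hd1]; linarith
        · obtain ⟨z0, z1, z2⟩ := hq0 q hq hzero
          exact Or.inl ⟨0, by rw [P_add_eq Pf1 q z0 z1 z2]; exact self_line Pf1 _⟩
      · rcases lt_or_eq_of_le hnn with hpos | hzero
        · right; rw [dot_add, hd2]; linarith
        · obtain ⟨z0, z1, z2⟩ := hq0 q hq hzero
          exact Or.inl ⟨1, by rw [P_add_eq Pf2 q z0 z1 z2]; exact Pf2_eq⟩
  · -- face of g at (15,10,12) is a segment
    rw [hFace]
    have hlt : ∀ q : V3, (∀ i, 0 ≤ q i) → 0 ≤ dot ![(15:ℝ),10,12] q := fun q hq =>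
      dot_nonneg' _ q (by intro i; fin_cases i <;> norm_num) hq
    have hq0 : ∀ q : V3, (∀ i, 0 ≤ q i) → 0 = dot ![(15:ℝ),10,12] q →
        q 0 = 0 ∧ q 1 = 0 ∧ q 2 = 0 := by
      intro q hq hzero
      have e := dot_expand ![(15:ℝ),10,12] q
      simp only [Matrix.cons_val_zero, Matrix.cons_val_one, Matrix.head_cons,
        Matrix.cons_val_two, Matrix.tail_cons] at e
      have := hq 0; have := hq 1; have := hq 2
      exact ⟨by linarith, by linarith, by linarith⟩
    have hPg1 : (Pg1 : V3) ∈ gen g := (gen_g_iff g hg Pg1).mpr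
      ⟨0, fun i => le_refl 0, Or.inl (add_zero_V3 Pg1).symm⟩
    have hr := Face_line_rank g ![15,10,12] Pg1 ![-4,0,5] 60
      (by rw [dot_expand]; norm_num [Pg1])
      (by rw [dot_expand]; norm_num) ?_ Pg1 hPg1 (by rw [dot_expand]; norm_num [Pg1])
    · omega
    · intro w hw
      rw [gen_g_iff g hg] at hw
      obtain ⟨q, hq, hcase⟩ := hw
      have hnn := hlt q hq
      have hd1 : dot ![(15:ℝ),10,12] Pg1 = 60 := by rw [dot_expand]; norm_num [Pg1]
      have hd2 : dot ![(15:ℝ),10,12] Pg2 = 60 := by rw [dot_expand]; norm_num [Pg2]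
      rcases hcase with rfl | rfl
      · rcases lt_or_eq_of_le hnn with hpos | hzero
        · right; rw [dot_add, hd1]; linarith
        · obtain ⟨z0, z1, z2⟩ := hq0 q hq hzero
          exact Or.inl ⟨0, by rw [P_add_eq Pg1 q z0 z1 z2]; exact self_line Pg1 _⟩
      · rcases lt_or_eq_of_le hnn with hpos | hzero
        · right; rw [dot_add, hd2]; linarith
        · obtain ⟨z0, z1, z2⟩ := hq0 q hq hzero
          exact Or.inl ⟨1, by rw [P_add_eq Pg2 q z0 z1 z2]; exact Pg2_eq⟩
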